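/- Let $X, X^1,\ldots,X^m$ be nonempty compact convex subsets of $\mathbb{R}^A$ (for a finite index set $A$) such that $Y := X^1\cap\cdots\cap X^m$ contains an $\ell_1$-ball of radius $\rho>0$ and $X^i\subseteq X$ for all $i$. Let $\epsilon>0$ and let $x\in X$ satisfy $\mathrm{dist}_1(X^i,x)\le\epsilon$ for every $i\in[m]$. Then $\mathrm{dist}_1(Y,x)\le \frac{\epsilon}{\rho}\,\mathrm{diam}(X)$, where distances and diameter are taken with respect to the $\ell_1$-norm. -/

import Mathlib

/-- If each `Xⁱ ⊆ X` and their intersection contains an `ℓ₁`-ball of radius `ρ`, then a point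
of `X` at `ℓ₁`-distance at most `ε` from each `Xⁱ` is at distance at most `(ε/ρ) diam X`
from the intersection. All metric notions are for the `ℓ₁` norm (`PiLp 1`). -/
theorem stmt10 (A : Type*) [Fintype A] (m : ℕ)
    (X : Set (PiLp 1 fun _ : A => ℝ)) (Xi : Fin m → Set (PiLp 1 fun _ : A => ℝ))
    (hXne : X.Nonempty) (hXc : IsCompact X) (hXconv : Convex ℝ X)
    (hXine : ∀ i, (Xi i).Nonempty) (hXic : ∀ i, IsCompact (Xi i))
    (hXiconv : ∀ i, Convex ℝ (Xi i))
    (hsub : ∀ i, Xi i ⊆ X)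
    (ρ : ℝ) (hρ : 0 < ρ) (c : PiLp 1 fun _ : A => ℝ)
    (hball : Metric.closedBall c ρ ⊆ ⋂ i, Xi i)
    (ε : ℝ) (hε : 0 < ε)
    (x : PiLp 1 fun _ : A => ℝ) (hx : x ∈ X)
    (hdist : ∀ i, Metric.infDist x (Xi i) ≤ ε) :
    Metric.infDist x (⋂ i, Xi i) ≤ ε / ρ * Metric.diam X := by
  have hrhs : 0 ≤ ε / ρ * Metric.diam X :=
    mul_nonneg (div_nonneg hε.le hρ.le) Metric.diam_nonneg
  rcases Nat.eq_zero_or_pos m with hm | hm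
  · subst hm
    rw [Set.iInter_of_empty]
    have : Metric.infDist x (Set.univ : Set (PiLp 1 fun _ : A => ℝ)) = 0 :=
      Metric.infDist_zero_of_mem (Set.mem_univ x)
    rw [this]; exact hrhs
  -- c ∈ X
  have hcball : c ∈ Metric.closedBall c ρ := Metric.mem_closedBall_self hρ.le
  have hcY : c ∈ ⋂ i, Xi i := hball hcball
  have hcX : c ∈ X := hsub ⟨0, hm⟩ (Set.mem_iInter.mp hcY ⟨0, hm⟩)
  have hρε : 0 < ρ + ε := by linarith
  set y : PiLp 1 fun _ : A => ℝ := (ε / (ρ + ε)) • c + (ρ / (ρ + ε)) • x with hy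
  have hyY : y ∈ ⋂ i, Xi i := by
    refine Set.mem_iInter.mpr fun i => ?_
    obtain ⟨xi, hxi, hdxi⟩ := (hXic i).exists_infDist_eq_dist (hXine i) x
    have hdle : dist x xi ≤ ε := hdxi ▸ hdist i
    set p : PiLp 1 fun _ : A => ℝ := c + (ρ / ε) • (x - xi) with hp
    have hpball : p ∈ Metric.closedBall c ρ := by
      rw [Metric.mem_closedBall, hp, dist_eq_norm]
      have : c + (ρ / ε) • (x - xi) - c = (ρ / ε) • (x - xi) := by abel
      rw [this, norm_smul, Real.norm_eq_abs, abs_of_nonneg (by positivity)]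
      calc ρ / ε * ‖x - xi‖ ≤ ρ / ε * ε := by
            have : ‖x - xi‖ ≤ ε := by rwa [← dist_eq_norm]
            exact mul_le_mul_of_nonneg_left this (by positivity)
        _ = ρ := by field_simp
    have hpXi : p ∈ Xi i := Set.mem_iInter.mp (hball hpball) i
    have hcomb : y = (ε / (ρ + ε)) • p + (ρ / (ρ + ε)) • xi := by
      rw [hy, hp]
      match_scalars <;> field_simp <;> ring
    rw [hcomb]
    exact (hXiconv i) hpXi hxi (by positivity) (by positivity)
      (by field_simp; ring)
  have hdxy : dist x y = (ε / (ρ + ε)) * dist x c := by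
    rw [dist_eq_norm, dist_eq_norm]
    have : x - y = (ε / (ρ + ε)) • (x - c) := by
      rw [hy]
      match_scalars <;> field_simp <;> ring
    rw [this, norm_smul, Real.norm_eq_abs, abs_of_nonneg (by positivity)]
  calc Metric.infDist x (⋂ i, Xi i) ≤ dist x y := Metric.infDist_le_dist_of_mem hyY
    _ = (ε / (ρ + ε)) * dist x c := hdxy
    _ ≤ (ε / ρ) * Metric.diam X := by
        apply mul_le_mul
        · apply div_le_div_of_nonneg_left hε.le hρ (by linarith)
        · exact Metric.dist_le_diam_of_mem hXc.isBounded hx hcX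
        · exact dist_nonneg
        · positivity
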